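/- The set of all real matrices of arbitrary (finite, positive) dimensions with the semi-tensor product ⋉ forms a monoid, with identity element the 1×1 matrix [1]. -/

import Mathlib

open Matrix Kronecker

noncomputable section

/-- `A ⊗ I_s`, reindexed to `Fin (m*s) × Fin (n*s)` index types. -/
def mkron {m n : ℕ} (A : Matrix (Fin m) (Fin n) ℝ) (s : ℕ) :
    Matrix (Fin (m * s)) (Fin (n * s)) ℝ :=
  Matrix.reindex finProdFinEquiv finProdFinEquiv
    (Matrix.kroneckerMap (· * ·) A (1 : Matrix (Fin s) (Fin s) ℝ))

/-- `x ⊗ 1_s`: each entry of `x` repeated `s` times (Kronecker with the all-ones vector). -/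
def vkron {r : ℕ} (x : Fin r → ℝ) (s : ℕ) : Fin (r * s) → ℝ :=
  fun i => x (finProdFinEquiv.symm i).1

/-- The semi-tensor (M-) product `A ⋉ B = (A ⊗ I_{t/n})(B ⊗ I_{t/p})`, `t = lcm n p`. -/
def stp {m n p q : ℕ} (A : Matrix (Fin m) (Fin n) ℝ) (B : Matrix (Fin p) (Fin q) ℝ) :
    Matrix (Fin (m * (Nat.lcm n p / n))) (Fin (q * (Nat.lcm n p / p))) ℝ :=
  mkron A (Nat.lcm n p / n) *
    (mkron B (Nat.lcm n p / p)).submatrix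
      (Fin.cast (by
        rw [Nat.mul_div_cancel' (Nat.dvd_lcm_left n p),
          Nat.mul_div_cancel' (Nat.dvd_lcm_right n p)])) id

/-- The vector (V-) product `A ⋉_V x = (A ⊗ I_{t/n})(x ⊗ 1_{t/r})`, `t = lcm n r`. -/
def vprod {m n r : ℕ} (A : Matrix (Fin m) (Fin n) ℝ) (x : Fin r → ℝ) :
    Fin (m * (Nat.lcm n r / n)) → ℝ :=
  (mkron A (Nat.lcm n r / n)).mulVec fun j =>
    vkron x (Nat.lcm n r / r)
      (Fin.cast (by
        rw [Nat.mul_div_cancel' (Nat.dvd_lcm_left n r),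
          Nat.mul_div_cancel' (Nat.dvd_lcm_right n r)]) j)

/-- V-addition `x ⊞ y = (x ⊗ 1_{t/m}) + (y ⊗ 1_{t/n})`, `t = lcm m n`. -/
def vadd2 {m n : ℕ} (x : Fin m → ℝ) (y : Fin n → ℝ) : Fin (Nat.lcm m n) → ℝ :=
  fun i =>
    vkron x (Nat.lcm m n / m) (Fin.cast (Nat.mul_div_cancel' (Nat.dvd_lcm_left m n)).symm i) +
    vkron y (Nat.lcm m n / n) (Fin.cast (Nat.mul_div_cancel' (Nat.dvd_lcm_right m n)).symm i)

/-- V-subtraction `x ⊟ y = (x ⊗ 1_{t/m}) - (y ⊗ 1_{t/n})`, `t = lcm m n`. -/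
def vsub2 {m n : ℕ} (x : Fin m → ℝ) (y : Fin n → ℝ) : Fin (Nat.lcm m n) → ℝ :=
  fun i =>
    vkron x (Nat.lcm m n / m) (Fin.cast (Nat.mul_div_cancel' (Nat.dvd_lcm_left m n)).symm i) -
    vkron y (Nat.lcm m n / n) (Fin.cast (Nat.mul_div_cancel' (Nat.dvd_lcm_right m n)).symm i)

/-- The dimension-normalized norm `‖x‖_V = sqrt((1/k) ∑ xᵢ²)`. -/
def vnorm {k : ℕ} (x : Fin k → ℝ) : ℝ :=
  Real.sqrt ((∑ i, x i ^ 2) / k)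

/-- The dimension-free inner product `⟨x,y⟩_V = (1/t)⟨x⊗1_{t/m}, y⊗1_{t/n}⟩`. -/
def vinner {m n : ℕ} (x : Fin m → ℝ) (y : Fin n → ℝ) : ℝ :=
  (∑ i : Fin (Nat.lcm m n),
      vkron x (Nat.lcm m n / m) (Fin.cast (Nat.mul_div_cancel' (Nat.dvd_lcm_left m n)).symm i) *
      vkron y (Nat.lcm m n / n)
        (Fin.cast (Nat.mul_div_cancel' (Nat.dvd_lcm_right m n)).symm i)) /
    (Nat.lcm m n)

/-- The dimension-free distance `d(x,y) = ‖x ⊟ y‖_V`. -/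
def vdist {m n : ℕ} (x : Fin m → ℝ) (y : Fin n → ℝ) : ℝ := vnorm (vsub2 x y)

/-- The spectral norm `‖A‖ = sqrt(σ_max(AᵀA))` (largest eigenvalue of `AᵀA = AᴴA` over `ℝ`). -/
def specNorm {m n : ℕ} (A : Matrix (Fin m) (Fin n) ℝ) : ℝ :=
  Real.sqrt (⨆ i, (show (Aᵀ * A).IsHermitian by
    simpa [Matrix.conjTranspose_eq_transpose_of_trivial] using
      Matrix.isHermitian_conjTranspose_mul_self A).eigenvalues i)

/-- Vector equivalence: `x ↔ y` iff `x ⊗ 1_α = y ⊗ 1_β` for some `α, β ≥ 1`. -/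
def VEquiv {m n : ℕ} (x : Fin m → ℝ) (y : Fin n → ℝ) : Prop :=
  ∃ (α β : ℕ), 0 < α ∧ 0 < β ∧
    ∃ h : m * α = n * β, ∀ i, vkron x α i = vkron y β (Fin.cast h i)

/-- Matrix equivalence: `A ∼ B` iff `A ⊗ I_α = B ⊗ I_β` for some `α, β ≥ 1`. -/
def MEquiv {m n p q : ℕ} (A : Matrix (Fin m) (Fin n) ℝ) (B : Matrix (Fin p) (Fin q) ℝ) : Prop :=
  ∃ (α β : ℕ), 0 < α ∧ 0 < β ∧
    ∃ (h1 : m * α = p * β) (h2 : n * α = q * β),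
      ∀ i j, mkron A α i j = mkron B β (Fin.cast h1 i) (Fin.cast h2 j)

/-- `R^r` is `A`-invariant: `A ⋉_V x ∈ R^r` for every `x ∈ R^r`. -/
def AInvariant {m n : ℕ} (A : Matrix (Fin m) (Fin n) ℝ) (r : ℕ) : Prop :=
  ∀ x : Fin r → ℝ, ∃ y : Fin r → ℝ,
    (⟨_, vprod A x⟩ : Σ k : ℕ, Fin k → ℝ) = ⟨r, y⟩

lemma stp_def {m n p q : ℕ} (A : Matrix (Fin m) (Fin n) ℝ) (B : Matrix (Fin p) (Fin q) ℝ) :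
    stp A B = @HMul.hMul _ _ _ (Matrix.instHMulOfFintypeOfMulOfAddCommMonoid
      (l := Fin (m * (Nat.lcm n p / n))) (m := Fin (n * (Nat.lcm n p / n)))
      (n := Fin (q * (Nat.lcm n p / p))))
      (mkron A (Nat.lcm n p / n))
      ((mkron B (Nat.lcm n p / p)).submatrix
        (Fin.cast (by
          rw [Nat.mul_div_cancel' (Nat.dvd_lcm_left n p),
            Nat.mul_div_cancel' (Nat.dvd_lcm_right n p)])) id) := rfl

lemma sigEq_cast {a b a' b' : ℕ} (h1 : a = a') (h2 : b = b') (M : Matrix (Fin a') (Fin b') ℝ) :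
    (⟨a, b, M.submatrix (Fin.cast h1) (Fin.cast h2)⟩ : Σ a b : ℕ, Matrix (Fin a) (Fin b) ℝ)
      = ⟨a', b', M⟩ := by
  subst h1; subst h2; simp

lemma sigEq_cast' {a b a' : ℕ} (h1 : a = a') (M : Matrix (Fin a') (Fin b) ℝ) :
    (⟨a, b, M.submatrix (Fin.cast h1) id⟩ : Σ a b : ℕ, Matrix (Fin a) (Fin b) ℝ)
      = ⟨a', b, M⟩ := by
  subst h1; simp

lemma mkron_one1 (s : ℕ) :
    mkron (Matrix.of fun (_ : Fin 1) (_ : Fin 1) => (1 : ℝ)) s = 1 := by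
  have h : (Matrix.of fun (_ : Fin 1) (_ : Fin 1) => (1 : ℝ)) = 1 := by
    ext i j
    have : i = j := Subsingleton.elim i j
    simp [this, Matrix.one_apply]
  rw [mkron, h, Matrix.one_kronecker_one, Matrix.reindex_apply]
  exact Matrix.submatrix_one_equiv finProdFinEquiv.symm

lemma mkron_mul {m n q : ℕ} (A : Matrix (Fin m) (Fin n) ℝ) (B : Matrix (Fin n) (Fin q) ℝ)
    (s : ℕ) : mkron (A * B) s = mkron A s * mkron B s := by
  simp only [mkron, Matrix.reindex_apply]
  rw [Matrix.submatrix_mul_equiv _ _ _ finProdFinEquiv.symm _]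
  rw [← Matrix.mul_kronecker_mul, Matrix.one_mul]

lemma mkron_mkron {m n : ℕ} (A : Matrix (Fin m) (Fin n) ℝ) (s s' : ℕ) (hs' : 0 < s') :
    mkron (mkron A s) s' = (mkron A (s * s')).submatrix
      (Fin.cast (mul_assoc m s s')) (Fin.cast (mul_assoc n s s')) := by
  ext i j
  simp only [mkron, Matrix.reindex_apply, Matrix.submatrix_apply, Matrix.kroneckerMap_apply,
    finProdFinEquiv_symm_apply, Matrix.one_apply]
  have hA : A (i.divNat.divNat) (j.divNat.divNat)
      = A ((Fin.cast (mul_assoc m s s') i).divNat) ((Fin.cast (mul_assoc n s s') j).divNat) := by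
    congr 1 <;> (apply Fin.ext; simp [Fin.coe_divNat, Nat.div_div_eq_div_mul, mul_comm s s'])
  have hcond : ((i.divNat.modNat = j.divNat.modNat) ∧ (i.modNat = j.modNat)) ↔
      ((Fin.cast (mul_assoc m s s') i).modNat = (Fin.cast (mul_assoc n s s') j).modNat) := by
    simp only [Fin.ext_iff, Fin.coe_modNat, Fin.coe_divNat, Fin.coe_cast]
    rw [mul_comm s s', Nat.mod_mul, Nat.mod_mul]
    constructor
    · rintro ⟨h1, h2⟩; rw [h1, h2]
    · intro h
      have e1 : (i : ℕ) % s' = (j : ℕ) % s' := by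
        have := congrArg (· % s') h
        simpa [Nat.add_mul_mod_self_left, Nat.mod_mod_of_dvd, Nat.mod_self,
          Nat.mod_eq_of_lt (Nat.mod_lt (i : ℕ) hs'),
          Nat.mod_eq_of_lt (Nat.mod_lt (j : ℕ) hs')] using this
      refine ⟨Nat.eq_of_mul_eq_mul_left hs' ?_, e1⟩
      omega
  rw [← hA]
  by_cases h1 : i.divNat.modNat = j.divNat.modNat <;>
    by_cases h2 : i.modNat = j.modNat <;>
    simp [h1, h2] <;> simp [h1, h2, not_and] at hcond <;> simp [hcond, h1, h2]

lemma mkron_congr {m n : ℕ} (A : Matrix (Fin m) (Fin n) ℝ) {s s' : ℕ} (h : s = s') :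
    mkron A s = (mkron A s').submatrix (Fin.cast (by rw [h])) (Fin.cast (by rw [h])) := by
  subst h; simp

lemma mkron_submatrix' {a b a' : ℕ} (M : Matrix (Fin a) (Fin b) ℝ) (h1 : a' = a) (s : ℕ) :
    mkron (M.submatrix (Fin.cast h1) id) s
      = (mkron M s).submatrix (Fin.cast (by rw [h1])) id := by
  subst h1; simp

lemma cast_mul_cast {a a' b b₀ c d d' : ℕ}
    (M : Matrix (Fin a) (Fin b) ℝ) (N : Matrix (Fin c) (Fin d) ℝ)
    (h1 : a' = a) (h2 : b₀ = b) (h3 : b₀ = c) (h4 : d' = d) :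
    (M.submatrix (Fin.cast h1) (Fin.cast h2)) * (N.submatrix (Fin.cast h3) (Fin.cast h4))
      = (M * N.submatrix (Fin.cast (h2.symm.trans h3)) id).submatrix
          (Fin.cast h1) (Fin.cast h4) := by
  subst h1 h2 h3 h4; simp

lemma cast_mul_cast' {a a' b b₀ c d : ℕ}
    (M : Matrix (Fin a) (Fin b) ℝ) (N : Matrix (Fin c) (Fin d) ℝ)
    (h1 : a' = a) (h2 : b₀ = b) (h3 : b₀ = c) :
    (M.submatrix (Fin.cast h1) (Fin.cast h2)) * (N.submatrix (Fin.cast h3) id)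
      = (M * N.submatrix (Fin.cast (h2.symm.trans h3)) id).submatrix (Fin.cast h1) id := by
  subst h1 h2 h3; simp

lemma mul_cast_assoc {a b b' c c' d : ℕ}
    (X : Matrix (Fin a) (Fin b) ℝ) (Y : Matrix (Fin b') (Fin c) ℝ) (Z : Matrix (Fin c') (Fin d) ℝ)
    (hb : b = b') (hc : c = c') :
    (X * Y.submatrix (Fin.cast hb) id) * Z.submatrix (Fin.cast hc) id
      = X * ((Y * Z.submatrix (Fin.cast hc) id).submatrix (Fin.cast hb) id) := by
  subst hb hc; simp [Matrix.mul_assoc]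

lemma one_cast_mul {a b c d : ℕ} (h1 : a = c) (h2 : b = c) (N : Matrix (Fin b) (Fin d) ℝ) :
    ((1 : Matrix (Fin c) (Fin c) ℝ).submatrix (Fin.cast h1) (Fin.cast h2)) * N
      = N.submatrix (Fin.cast (h1.trans h2.symm)) id := by
  subst h1; subst h2; simp

lemma mul_one_cast {a b c : ℕ} (M : Matrix (Fin a) (Fin b) ℝ) (h : b = c) :
    M * ((1 : Matrix (Fin c) (Fin c) ℝ).submatrix (Fin.cast h) id)
      = M.submatrix id (Fin.cast h.symm) := by
  subst h; simp

lemma cast_comp_cast {a b c : ℕ} (h1 : a = b) (h2 : b = c) :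
    Fin.cast h2 ∘ Fin.cast h1 = Fin.cast (h1.trans h2) := by
  funext i; simp [Fin.cast_cast]

lemma mkron_A1 {m n : ℕ} (A : Matrix (Fin m) (Fin n) ℝ) :
    mkron A 1 = A.submatrix (Fin.cast (mul_one m)) (Fin.cast (mul_one n)) := by
  ext i j
  simp only [mkron, Matrix.reindex_apply, Matrix.submatrix_apply, Matrix.kroneckerMap_apply,
    finProdFinEquiv_symm_apply, Matrix.one_apply]
  have : i.modNat = j.modNat := Subsingleton.elim _ _
  rw [if_pos this]
  rw [mul_one]
  congr 1 <;> (apply Fin.ext; simp [Fin.coe_divNat])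
lemma key_nat (n p q u : ℕ) (hn : 0 < n) (hp : 0 < p) (hq : 0 < q) (hu : 0 < u) :
    (Nat.lcm n (p * (Nat.lcm q u / q)) / n
        = (Nat.lcm n p / n) * (Nat.lcm (q * (Nat.lcm n p / p)) u / (q * (Nat.lcm n p / p)))) ∧
    ((Nat.lcm q u / q) * (Nat.lcm n (p * (Nat.lcm q u / q)) / (p * (Nat.lcm q u / q)))
        = (Nat.lcm n p / p) * (Nat.lcm (q * (Nat.lcm n p / p)) u / (q * (Nat.lcm n p / p)))) ∧
    (Nat.lcm (q * (Nat.lcm n p / p)) u / u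
        = (Nat.lcm q u / u) * (Nat.lcm n (p * (Nat.lcm q u / q)) / (p * (Nat.lcm q u / q)))) := by
  set t1 := Nat.lcm n p with ht1def
  have ht1 : 0 < t1 := Nat.lcm_pos hn hp
  set α := t1 / n with hα
  set β := t1 / p with hβ
  have hnα : n * α = t1 := Nat.mul_div_cancel' (Nat.dvd_lcm_left n p)
  have hpβ : p * β = t1 := Nat.mul_div_cancel' (Nat.dvd_lcm_right n p)
  have hβpos : 0 < β := Nat.div_pos (Nat.le_of_dvd ht1 (Nat.dvd_lcm_right n p)) hp
  set t2 := Nat.lcm q u with ht2def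
  have ht2 : 0 < t2 := Nat.lcm_pos hq hu
  set w := t2 / q with hw
  set δ' := t2 / u with hδ'
  have hqw : q * w = t2 := Nat.mul_div_cancel' (Nat.dvd_lcm_left q u)
  have huδ' : u * δ' = t2 := Nat.mul_div_cancel' (Nat.dvd_lcm_right q u)
  have hwpos : 0 < w := Nat.div_pos (Nat.le_of_dvd ht2 (Nat.dvd_lcm_left q u)) hq
  set t3 := Nat.lcm (q * β) u with ht3def
  have hqβpos : 0 < q * β := Nat.mul_pos hq hβpos
  have ht3 : 0 < t3 := Nat.lcm_pos hqβpos hu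
  set γ := t3 / (q * β) with hγdef
  set δ := t3 / u with hδdef
  have hγ : (q * β) * γ = t3 := Nat.mul_div_cancel' (Nat.dvd_lcm_left _ _)
  have hδ : u * δ = t3 := Nat.mul_div_cancel' (Nat.dvd_lcm_right _ _)
  set t4 := Nat.lcm n (p * w) with ht4def
  set α' := t4 / n with hα'
  set γ' := t4 / (p * w) with hγ'
  have hnα' : n * α' = t4 := Nat.mul_div_cancel' (Nat.dvd_lcm_left _ _)
  have hpwγ' : (p * w) * γ' = t4 := Nat.mul_div_cancel' (Nat.dvd_lcm_right _ _)
  -- T := n * (α * γ)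
  have hTn : n * (α * γ) = t1 * γ := by rw [← hnα, mul_assoc]
  have hT : n * (α * γ) = p * (β * γ) := by rw [hTn, ← hpβ, mul_assoc]
  have hqbg : q * (β * γ) = t3 := by rw [← hγ]; ring
  have ht2t3 : t2 ∣ t3 :=
    Nat.lcm_dvd (dvd_trans (dvd_mul_right q β) (Nat.dvd_lcm_left _ _)) (Nat.dvd_lcm_right _ _)
  have hwdvd : w ∣ β * γ := by
    have h1 : q * w ∣ q * (β * γ) := by rw [hqw, hqbg]; exact ht2t3
    exact (Nat.mul_dvd_mul_iff_left hq).mp h1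
  have hA : t4 ∣ n * (α * γ) :=
    Nat.lcm_dvd ⟨α * γ, rfl⟩ (by rw [hT]; exact mul_dvd_mul_left p hwdvd)
  -- reverse direction
  have hpt4 : p ∣ t4 := dvd_trans (dvd_mul_right p w) (Nat.dvd_lcm_right _ _)
  obtain ⟨z, hz⟩ := hpt4
  have ht1t4 : t1 ∣ t4 := Nat.lcm_dvd (Nat.dvd_lcm_left _ _) (dvd_trans (dvd_mul_right p w) (Nat.dvd_lcm_right _ _))
  have hβz : β ∣ z := by
    have h1 : p * β ∣ p * z := by rw [hpβ, ← hz]; exact ht1t4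
    exact (Nat.mul_dvd_mul_iff_left hp).mp h1
  have hwz : w ∣ z := by
    have h1 : p * w ∣ p * z := by rw [← hz]; exact Nat.dvd_lcm_right _ _
    exact (Nat.mul_dvd_mul_iff_left hp).mp h1
  have huqz : u ∣ q * z := by
    have h2 : t2 ∣ q * z := by rw [← hqw]; exact mul_dvd_mul_left q hwz
    exact dvd_trans (by rw [ht2def] at h2 ⊢; exact Nat.dvd_lcm_right q u) h2
  have ht3qz : t3 ∣ q * z := Nat.lcm_dvd (mul_dvd_mul_left q hβz) huqz
  have hβγz : β * γ ∣ z := by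
    have h1 : q * (β * γ) ∣ q * z := by rw [hqbg]; exact ht3qz
    exact (Nat.mul_dvd_mul_iff_left hq).mp h1
  have hB : n * (α * γ) ∣ t4 := by rw [hT, hz]; exact mul_dvd_mul_left p hβγz
  have hTeq : n * (α * γ) = t4 := Nat.dvd_antisymm hB hA
  have g1 : α' = α * γ := by
    have := hTeq.trans hnα'.symm
    exact (Nat.eq_of_mul_eq_mul_left hn this).symm
  have g2 : w * γ' = β * γ := by
    have h1 : p * (w * γ') = p * (β * γ) := by
      rw [← mul_assoc, hpwγ', ← hT, hTeq]
    exact Nat.eq_of_mul_eq_mul_left hp h1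
  have g3 : δ = δ' * γ' := by
    have h1 : u * δ = u * (δ' * γ') := by
      rw [hδ, ← hqbg, ← g2, ← mul_assoc, ← mul_assoc, hqw, huδ']
    exact Nat.eq_of_mul_eq_mul_left hu h1
  exact ⟨g1, g2, g3⟩

/-- matrices of arbitrary positive dimensions form a monoid under the
semi-tensor product, with identity the `1×1` matrix `[1]`. -/
theorem stp_monoid :
    (∀ (m n p q u v : ℕ), 0 < m → 0 < n → 0 < p → 0 < q → 0 < u → 0 < v →
      ∀ (A : Matrix (Fin m) (Fin n) ℝ) (B : Matrix (Fin p) (Fin q) ℝ)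
        (C : Matrix (Fin u) (Fin v) ℝ),
        (⟨_, _, stp (stp A B) C⟩ : Σ a b : ℕ, Matrix (Fin a) (Fin b) ℝ)
          = ⟨_, _, stp A (stp B C)⟩) ∧
    (∀ (m n : ℕ), 0 < m → 0 < n → ∀ A : Matrix (Fin m) (Fin n) ℝ,
      (⟨_, _, stp (Matrix.of fun (_ : Fin 1) (_ : Fin 1) => (1 : ℝ)) A⟩ :
          Σ a b : ℕ, Matrix (Fin a) (Fin b) ℝ) = ⟨m, n, A⟩ ∧
      (⟨_, _, stp A (Matrix.of fun (_ : Fin 1) (_ : Fin 1) => (1 : ℝ))⟩ :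
          Σ a b : ℕ, Matrix (Fin a) (Fin b) ℝ) = ⟨m, n, A⟩) := by
  refine ⟨?_, ?_⟩
  · intro m n p q u v hm hn hp hq hu hv A B C

    obtain ⟨g1, g2, g3⟩ := key_nat n p q u hn hp hq hu
    simp only [stp_def]
    have hlcmnp : 0 < Nat.lcm n p := Nat.lcm_pos hn hp
    have hβpos : 0 < Nat.lcm n p / p :=
      Nat.div_pos (Nat.le_of_dvd hlcmnp (Nat.dvd_lcm_right n p)) hp
    have hqβpos : 0 < q * (Nat.lcm n p / p) := Nat.mul_pos hq hβpos
    have hγpos : 0 < Nat.lcm (q * (Nat.lcm n p / p)) u / (q * (Nat.lcm n p / p)) :=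
      Nat.div_pos (Nat.le_of_dvd (Nat.lcm_pos hqβpos hu) (Nat.dvd_lcm_left _ _)) hqβpos
    have hwpos : 0 < Nat.lcm q u / q :=
      Nat.div_pos (Nat.le_of_dvd (Nat.lcm_pos hq hu) (Nat.dvd_lcm_left q u)) hq
    have hpwpos : 0 < p * (Nat.lcm q u / q) := Nat.mul_pos hp hwpos
    have hγ'pos : 0 < Nat.lcm n (p * (Nat.lcm q u / q)) / (p * (Nat.lcm q u / q)) :=
      Nat.div_pos (Nat.le_of_dvd (Nat.lcm_pos hn hpwpos) (Nat.dvd_lcm_right _ _)) hpwpos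
    rw [mkron_mul, mkron_mkron A _ _ hγpos, mkron_submatrix', mkron_mkron B _ _ hγpos,
      Matrix.submatrix_submatrix, Function.comp_id, cast_comp_cast]
    rw [cast_mul_cast]
    rw [cast_mul_cast']
    rw [sigEq_cast']
    -- now the RHS
    rw [mkron_mul, mkron_mkron B _ _ hγ'pos, mkron_submatrix', mkron_mkron C _ _ hγ'pos,
      Matrix.submatrix_submatrix, Function.comp_id, cast_comp_cast]
    rw [mkron_congr A g1, mkron_congr B g2, mkron_congr C g3.symm]
    rw [Matrix.submatrix_submatrix, Matrix.submatrix_submatrix, cast_comp_cast, cast_comp_cast,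
      cast_comp_cast, cast_comp_cast]
    rw [cast_mul_cast]
    rw [Matrix.submatrix_submatrix, Function.comp_id, cast_comp_cast]
    rw [cast_mul_cast]
    rw [← mul_cast_assoc]
    rw [sigEq_cast]
  · intro m n hm hn A
    refine ⟨?_, ?_⟩
    · have e1 : Nat.lcm 1 m / 1 = m := by simp [Nat.lcm_one_left]
      have e2 : Nat.lcm 1 m / m = 1 := by simp [Nat.lcm_one_left, Nat.div_self hm]
      have E : stp (Matrix.of fun (_ : Fin 1) (_ : Fin 1) => (1 : ℝ)) A
          = (A.submatrix (Fin.cast (by rw [e1, one_mul]) : Fin (1 * (Nat.lcm 1 m / 1)) → Fin m)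
              (Fin.cast (by rw [e2, mul_one]))) := by
        rw [stp_def]
        rw [mkron_congr _ e1, mkron_congr A e2, mkron_one1]
        rw [Matrix.submatrix_submatrix, Function.comp_id, cast_comp_cast]
        rw [one_cast_mul, Matrix.submatrix_submatrix, cast_comp_cast, Function.comp_id,
          mkron_A1, Matrix.submatrix_submatrix, cast_comp_cast, cast_comp_cast]
      rw [E]
      exact sigEq_cast _ _ A
    · have e1 : Nat.lcm n 1 / n = 1 := by simp [Nat.lcm_one_right, Nat.div_self hn]
      have e2 : Nat.lcm n 1 / 1 = n := by simp [Nat.lcm_one_right]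
      have E : stp A (Matrix.of fun (_ : Fin 1) (_ : Fin 1) => (1 : ℝ))
          = (A.submatrix (Fin.cast (by rw [e1, mul_one]) : Fin (m * (Nat.lcm n 1 / n)) → Fin m)
              (Fin.cast (by rw [e2, one_mul]))) := by
        rw [stp_def]
        rw [mkron_congr A e1, mkron_congr _ e2, mkron_one1]
        rw [Matrix.submatrix_submatrix, Function.comp_id, cast_comp_cast]
        rw [cast_mul_cast (b₀ := n * (Nat.lcm n 1 / n)), mul_one_cast, Matrix.submatrix_submatrix,
          mkron_A1, Matrix.submatrix_submatrix, Function.id_comp]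
        simp only [← Function.comp_assoc, cast_comp_cast]
      rw [E]
      exact sigEq_cast _ _ A
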